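/- If c is bounded on X×Y and f: X→ℝ, g: Y→ℝ satisfy the first-order conditions ∫(f(x)+g(y)-c(x,y))₊ dQ(y) = ε for all x ∈ X and ∫(f(x)+g(y)-c(x,y))₊ dP(x) = ε for all y ∈ Y, and the oscillations of f on X and of g on Y are each at most 2‖c‖_∞, then -5‖c‖_∞ + ε ≤ f(x) + g(y) ≤ 5‖c‖_∞ + ε for all (x,y) ∈ X×Y. -/

import Mathlib

open MeasureTheory

lemma exists_pts {β : Type*} [MeasurableSpace β] (Q : Measure β)
    [IsProbabilityMeasure Q] (Y : Set β) (hQY : Q Yᶜ = 0)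
    (h : β → ℝ) (ε : ℝ) (hε : 0 < ε) (hint : ∫ y, h y ∂Q = ε) :
    (∃ y ∈ Y, ε ≤ h y) ∧ (∃ y ∈ Y, h y ≤ ε) := by
  have hInt : Integrable h Q := by
    by_contra hni
    rw [integral_undef hni] at hint
    linarith
  have hYae : ∀ᵐ y ∂Q, y ∈ Y := by
    rw [ae_iff]
    exact hQY
  constructor
  · by_contra hcon
    push_neg at hcon
    have hlt : ∀ᵐ y ∂Q, h y < ε := hYae.mono fun y hy => hcon y hy
    have hk : Integrable (fun y => ε - h y) Q := (integrable_const ε).sub hInt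
    have hzero : ∫ y, (ε - h y) ∂Q = 0 := by
      rw [integral_sub (integrable_const ε) hInt, hint, integral_const]
      simp
    have h0 : (fun y => ε - h y) =ᵐ[Q] 0 :=
      (integral_eq_zero_iff_of_nonneg_ae (hlt.mono fun y hy => by simp only [Pi.zero_apply]; linarith) hk).mp hzero
    have : ∀ᵐ y ∂Q, False := (h0.and hlt).mono fun y ⟨h1, h2⟩ => by
      simp only [Pi.zero_apply] at h1; linarith
    exact (this.exists).elim fun y hy => hy
  · by_contra hcon
    push_neg at hcon
    have hlt : ∀ᵐ y ∂Q, ε < h y := hYae.mono fun y hy => hcon y hy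
    have hk : Integrable (fun y => h y - ε) Q := hInt.sub (integrable_const ε)
    have hzero : ∫ y, (h y - ε) ∂Q = 0 := by
      rw [integral_sub hInt (integrable_const ε), hint, integral_const]
      simp
    have h0 : (fun y => h y - ε) =ᵐ[Q] 0 :=
      (integral_eq_zero_iff_of_nonneg_ae (hlt.mono fun y hy => by simp only [Pi.zero_apply]; linarith) hk).mp hzero
    have : ∀ᵐ y ∂Q, False := (h0.and hlt).mono fun y ⟨h1, h2⟩ => by
      simp only [Pi.zero_apply] at h1; linarith
    exact (this.exists).elim fun y hy => hy

theorem stmt0 {α β : Type*} [MeasurableSpace α] [MeasurableSpace β]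
    (X : Set α) (Y : Set β) (hX : X.Nonempty) (hY : Y.Nonempty)
    (P : Measure α) (Q : Measure β)
    [IsProbabilityMeasure P] [IsProbabilityMeasure Q]
    (hPX : P Xᶜ = 0) (hQY : Q Yᶜ = 0)
    (f : α → ℝ) (g : β → ℝ) (c : α × β → ℝ) (C ε : ℝ) (hε : 0 < ε)
    (hc : ∀ x ∈ X, ∀ y ∈ Y, |c (x, y)| ≤ C)
    (hoscf : ∀ x ∈ X, ∀ x' ∈ X, f x - f x' ≤ 2 * C)
    (hoscg : ∀ y ∈ Y, ∀ y' ∈ Y, g y - g y' ≤ 2 * C)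
    (hfoc1 : ∀ x ∈ X, ∫ y, max (f x + g y - c (x, y)) 0 ∂Q = ε)
    (hfoc2 : ∀ y ∈ Y, ∫ x, max (f x + g y - c (x, y)) 0 ∂P = ε) :
    ∀ x ∈ X, ∀ y ∈ Y, -5 * C + ε ≤ f x + g y ∧ f x + g y ≤ 5 * C + ε := by
  intro x hx y hy
  have hC : 0 ≤ C := le_trans (abs_nonneg _) (hc x hx y hy)
  obtain ⟨⟨y₁, hy₁, hge⟩, ⟨y₂, hy₂, hle⟩⟩ :=
    exists_pts Q Y hQY (fun y => max (f x + g y - c (x, y)) 0) ε hε (hfoc1 x hx)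
  -- lower bound
  have hc1 := abs_le.mp (hc x hx y₁ hy₁)
  have h1 : ε ≤ f x + g y₁ - c (x, y₁) := by
    rcases le_or_gt (f x + g y₁ - c (x, y₁)) 0 with h | h
    · simp only [max_eq_right h] at hge; linarith
    · simpa [max_eq_left h.le] using hge
  have hosc1 := hoscg y₁ hy₁ y hy
  -- upper bound
  have hc2 := abs_le.mp (hc x hx y₂ hy₂)
  have h2 : f x + g y₂ - c (x, y₂) ≤ ε := le_trans (le_max_left _ _) hle
  have hosc2 := hoscg y hy y₂ hy₂
  constructor <;> linarith
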